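/- Let η(r) = 1 − a·e^{−b/r} for r ∈ (0,1] with b = 100n, a = 1/(100n)², and η(r) = 1 for r ≤ 0. Let ψ ∈ C^∞ satisfy ‖ψ − 1‖_{C²} < δ with δ sufficiently small (depending on n). Then for the warped metric dr² + (η(r)ψ(r))²g_{S^n} on [0, 1/2] one has: the modified radial curvature satisfies K̃_rad(r) ≥ K_rad(r) + (ab/(2r⁴))(b − 2r − 8δr²)e^{−b/r} > K_rad(r), the modified orbital curvature satisfies K̃_orb(r) ≥ K_orb(r) − 4δ(ab/r²)e^{−b/r} − 4((ab/r²)e^{−b/r})², and the modified scalar curvature satisfies R̃(r) ≥ R(r) + (nab/(2r⁴))((2 − 8na)b − 4r − 16nδr²)e^{−b/r} ≥ R(r). -/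

import Mathlib

open Set

/-- Radial sectional curvature `K_rad = −f''/f` of `dr² + f(r)²g_{Sⁿ}`. -/
noncomputable def Krad (f : ℝ → ℝ) (r : ℝ) : ℝ := -(deriv (deriv f) r) / f r

/-- Orbital sectional curvature `K_orb = (1−(f')²)/f²` of `dr² + f(r)²g_{Sⁿ}`. -/
noncomputable def Korb (f : ℝ → ℝ) (r : ℝ) : ℝ := (1 - (deriv f r) ^ 2) / (f r) ^ 2

/-- Scalar curvature `R = 2nK_rad + n(n-1)K_orb` of `dr² + f(r)²g_{Sⁿ}`. -/
noncomputable def Rscal (n : ℕ) (f : ℝ → ℝ) (r : ℝ) : ℝ :=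
  2 * (n : ℝ) * Krad f r + (n : ℝ) * ((n : ℝ) - 1) * Korb f r

/- ### Auxiliary derivative lemmas -/

lemma hDexp (b x : ℝ) (hx : x ≠ 0) :
    HasDerivAt (fun y : ℝ => Real.exp (-b / y)) (Real.exp (-b / x) * (b / x ^ 2)) x := by
  have h : HasDerivAt (fun y : ℝ => -b * y⁻¹) (-b * -(x ^ 2)⁻¹) x :=
    (hasDerivAt_inv hx).const_mul (-b)
  have he : (fun y : ℝ => -b / y) = fun y : ℝ => -b * y⁻¹ := by funext y; ring
  have h2 : HasDerivAt (fun y : ℝ => -b / y) (b / x ^ 2) x := by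
    rw [he]; convert h using 1; field_simp
  exact h2.exp

lemma hDeta (a b x : ℝ) (hx : x ≠ 0) :
    HasDerivAt (fun y : ℝ => 1 - a * Real.exp (-b / y))
      (-(a * b / x ^ 2 * Real.exp (-b / x))) x := by
  have h := ((hDexp b x hx).const_mul a).const_sub 1
  exact h.congr_deriv (by ring)

lemma hDeta' (a b x : ℝ) (hx : x ≠ 0) :
    HasDerivAt (fun y : ℝ => -(a * b / y ^ 2 * Real.exp (-b / y)))
      (-(a * b / x ^ 4 * (b - 2 * x) * Real.exp (-b / x))) x := by
  have hinv : HasDerivAt (fun y : ℝ => ((y:ℝ) ^ 2)⁻¹) (-(2 * x ^ 1) / (x ^ 2) ^ 2) x :=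
    (hasDerivAt_pow 2 x).inv (pow_ne_zero 2 hx)
  have h := ((hinv.mul (hDexp b x hx)).const_mul (-(a * b)))
  have he : (fun y : ℝ => -(a * b / y ^ 2 * Real.exp (-b / y)))
      = fun y : ℝ => -(a * b) * ((y ^ 2)⁻¹ * Real.exp (-b / y)) := by funext y; ring
  rw [he]
  exact h.congr_deriv (by ring)

lemma deriv1_eq (a b : ℝ) (ψ : ℝ → ℝ) (hψd : Differentiable ℝ ψ) (x : ℝ) (hx : x ≠ 0) :
    HasDerivAt (fun x => (1 - a * Real.exp (-b / x)) * ψ x)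
      (-(a * b / x ^ 2 * Real.exp (-b / x)) * ψ x
        + (1 - a * Real.exp (-b / x)) * deriv ψ x) x :=
  (hDeta a b x hx).mul (hψd x).hasDerivAt

lemma deriv2_eq (a b : ℝ) (ψ : ℝ → ℝ) (hψ : ContDiff ℝ 2 ψ) (r : ℝ) (hr0 : 0 < r) :
    deriv (deriv (fun x => (1 - a * Real.exp (-b / x)) * ψ x)) r
      = -(a * b / r ^ 4 * (b - 2 * r) * Real.exp (-b / r)) * ψ r
        - 2 * (a * b / r ^ 2 * Real.exp (-b / r)) * deriv ψ r
        + (1 - a * Real.exp (-b / r)) * deriv (deriv ψ) r := by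
  have hψd : Differentiable ℝ ψ := hψ.differentiable (by norm_num)
  have h2 : ContDiff ℝ ((1:ℕ)+1) ψ := by exact_mod_cast hψ
  have hψ1d : Differentiable ℝ (deriv ψ) :=
    ((contDiff_succ_iff_deriv.mp h2).2.2).differentiable (by norm_num)
  have hfg : deriv (fun x => (1 - a * Real.exp (-b / x)) * ψ x)
      =ᶠ[nhds r] fun x => -(a * b / x ^ 2 * Real.exp (-b / x)) * ψ x
        + (1 - a * Real.exp (-b / x)) * deriv ψ x := by
    filter_upwards [isOpen_Ioi.mem_nhds (show r ∈ Ioi 0 from hr0)] with x hx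
    exact (deriv1_eq a b ψ hψd x (ne_of_gt hx)).deriv
  have hgd : HasDerivAt (fun x => -(a * b / x ^ 2 * Real.exp (-b / x)) * ψ x
        + (1 - a * Real.exp (-b / x)) * deriv ψ x)
      ((-(a * b / r ^ 4 * (b - 2 * r) * Real.exp (-b / r)) * ψ r
          + -(a * b / r ^ 2 * Real.exp (-b / r)) * deriv ψ r)
        + (-(a * b / r ^ 2 * Real.exp (-b / r)) * deriv ψ r
          + (1 - a * Real.exp (-b / r)) * deriv (deriv ψ) r)) r :=
    ((hDeta' a b r (ne_of_gt hr0)).mul (hψd r).hasDerivAt).add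
      ((hDeta a b r (ne_of_gt hr0)).mul (hψ1d r).hasDerivAt)
  rw [hfg.deriv_eq, hgd.deriv]; ring

/- ### Auxiliary arithmetic lemmas -/

lemma rad_bracket (b r p p1 δ ae : ℝ) (hb : 200 ≤ b) (hr0 : 0 < r) (hr2 : r ≤ 1/2)
    (hp : 1/2 ≤ p) (hp1 : -δ ≤ p1) (hδ0 : 0 ≤ δ) (hδ : δ ≤ 1/200)
    (hae0 : 0 ≤ ae) :
    0 ≤ 2*(b-2*r)*p + 4*r^2*p1 - (b-2*r-8*δ*r^2)*(1-ae)*p := by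
  have hrr : r^2 ≤ 1/4 := by nlinarith
  have h0 : 0 ≤ b-2*r-8*δ*r^2 := by nlinarith
  have h2 : (b-2*r-8*δ*r^2)*(1-ae) ≤ b-2*r := by nlinarith
  have h3 : (b-2*r-8*δ*r^2)*(1-ae)*p ≤ (b-2*r)*p :=
    mul_le_mul_of_nonneg_right h2 (by linarith)
  have h5 : (199:ℝ)*(1/2) ≤ (b-2*r)*p := by nlinarith
  have h4 : -(4*r^2*δ) ≤ 4*r^2*p1 := by nlinarith
  nlinarith [h3, h4, h5]

lemma orb_ineq (u e p p1 δ : ℝ) (hu : 0 ≤ u) (he1 : e ≤ 1) (he2 : 1/2 ≤ e)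
    (hp : 1/2 ≤ p) (hp1l : -δ ≤ p1) (hδ0 : 0 ≤ δ) (hep : 1/2 ≤ e*p) :
    -(4*δ*u + 4*u^2) * (e^2*p^2) ≤ 1 - e^2 - u^2*p^2 + 2*e*p1*u*p := by
  have t1 : 0 ≤ 1 - e^2 := by nlinarith
  have t2 : u^2*p^2 ≤ 4*u^2*(e^2*p^2) := by
    nlinarith [mul_nonneg (mul_nonneg (sq_nonneg u) (sq_nonneg p))
      (show (0:ℝ) ≤ 4*e^2-1 by nlinarith)]
  have t3 : 0 ≤ 2*e*p1*u*p + 4*δ*u*(e^2*p^2) := by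
    have h4 : 0 ≤ p1 + 2*δ*(e*p) := by nlinarith
    have h5 : 0 ≤ (2*e*p*u) * (p1 + 2*δ*(e*p)) := mul_nonneg (by nlinarith) h4
    nlinarith [h5]
  nlinarith [t1, t2, t3]

lemma scal_bracket (nn a b E δ r : ℝ) (hn : 2 ≤ nn) (hab : 0 ≤ a*b)
    (hE1 : E ≤ 1) (hδ : 0 ≤ δ) :
    0 ≤ 2*nn*(b-2*r-8*δ*r^2) - 8*nn*(nn-1)*δ*r^2 - 8*nn*(nn-1)*(a*b)*E
      - nn*((2-8*nn*a)*b - 4*r - 16*nn*δ*r^2) := by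
  have h1 : 0 ≤ 8*(nn*(nn-1))*(δ*r^2) :=
    mul_nonneg (mul_nonneg (by norm_num) (mul_nonneg (by linarith) (by linarith)))
      (mul_nonneg hδ (sq_nonneg r))
  have h2 : 8*(nn*(nn-1))*((a*b)*E) ≤ 8*(nn*(nn-1))*(a*b) := by
    apply mul_le_mul_of_nonneg_left _ (by nlinarith)
    nlinarith
  have h3 : 8*(nn*(nn-1))*(a*b) ≤ 8*(nn*nn)*(a*b) := by
    apply mul_le_mul_of_nonneg_right _ hab
    nlinarith
  nlinarith [h1, h2, h3]

/- ### Main auxiliary lemma -/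

set_option maxHeartbeats 2000000 in
lemma main_aux (n : ℕ) (hn : 2 ≤ n) (a b : ℝ)
    (ha : a = 1 / (100 * (n : ℝ)) ^ 2) (hb : b = 100 * (n : ℝ))
    (δ : ℝ) (hδ : δ ∈ Ioo (0 : ℝ) (1 / (100 * (n : ℝ))))
    (ψ : ℝ → ℝ) (hψ : ContDiff ℝ 2 ψ)
    (hψb : ∀ r ∈ Icc (0 : ℝ) 1,
        |ψ r - 1| < δ ∧ |deriv ψ r| < δ ∧ |deriv (deriv ψ) r| < δ)
    (r : ℝ) (hr : r ∈ Ioc (0 : ℝ) (1 / 2)) :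
    (Krad ψ r + a * b / (2 * r ^ 4) * (b - 2 * r - 8 * δ * r ^ 2) * Real.exp (-b / r)
        ≤ Krad (fun x => (1 - a * Real.exp (-b / x)) * ψ x) r ∧
      Krad ψ r < Krad (fun x => (1 - a * Real.exp (-b / x)) * ψ x) r) ∧
    (Korb ψ r - 4 * δ * (a * b / r ^ 2) * Real.exp (-b / r)
        - 4 * ((a * b / r ^ 2) * Real.exp (-b / r)) ^ 2
        ≤ Korb (fun x => (1 - a * Real.exp (-b / x)) * ψ x) r) ∧
    (Rscal n ψ r + (n : ℝ) * a * b / (2 * r ^ 4)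
          * ((2 - 8 * (n : ℝ) * a) * b - 4 * r - 16 * (n : ℝ) * δ * r ^ 2)
          * Real.exp (-b / r) ≤ Rscal n (fun x => (1 - a * Real.exp (-b / x)) * ψ x) r ∧
      Rscal n ψ r ≤ Rscal n (fun x => (1 - a * Real.exp (-b / x)) * ψ x) r) := by
  obtain ⟨hr0, hr2⟩ := hr
  obtain ⟨hδ0, hδ1⟩ := hδ
  have hn2 : (2:ℝ) ≤ (n:ℝ) := by exact_mod_cast hn
  have hnpos : (0:ℝ) < (n:ℝ) := by linarith
  have hb200 : (200:ℝ) ≤ b := by rw [hb]; linarith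
  have hb0 : (0:ℝ) < b := by linarith
  have ha0 : (0:ℝ) < a := by rw [ha]; positivity
  have ha4 : a ≤ 1/40000 := by
    have h : (40000:ℝ) ≤ (100*(n:ℝ))^2 := by nlinarith
    rw [ha]
    exact one_div_le_one_div_of_le (by norm_num) h
  have hδ200 : δ < 1/200 := by
    have h : 1/(100*(n:ℝ)) ≤ 1/200 := by
      rw [div_le_div_iff₀ (by positivity) (by norm_num)]; linarith
    linarith
  have hndelta : (n:ℝ)*δ ≤ 1/100 := by
    have h := mul_lt_mul_of_pos_left hδ1 hnpos
    have h2 : (n:ℝ) * (1/(100*(n:ℝ))) = 1/100 := by field_simp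
    linarith
  have hna : (n:ℝ)*a ≤ 1/20000 := by
    have h2 : (n:ℝ)*a = 1/(10000*(n:ℝ)) := by rw [ha]; field_simp; ring
    rw [h2, div_le_div_iff₀ (by positivity) (by norm_num)]; linarith
  obtain ⟨hpa, hp1a, hp2a⟩ := hψb r ⟨le_of_lt hr0, by linarith⟩
  obtain ⟨hpl, hpu⟩ := abs_lt.mp hpa
  obtain ⟨hp1l, hp1u⟩ := abs_lt.mp hp1a
  have hr4 : (0:ℝ) < r^4 := pow_pos hr0 4
  have hr2' : (0:ℝ) < r^2 := pow_pos hr0 2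
  have hrr : r^2 ≤ 1/4 := by nlinarith
  set E := Real.exp (-b/r) with hE
  have hE0 : (0:ℝ) < E := Real.exp_pos _
  have hE1 : E ≤ 1 := by
    rw [hE, show (1:ℝ) = Real.exp 0 from (Real.exp_zero).symm]
    have hbr : (0:ℝ) ≤ b/r := div_nonneg hb0.le hr0.le
    exact Real.exp_le_exp.mpr (by rw [neg_div]; linarith)
  have hae : a*E ≤ 1/40000 := by
    have h := mul_le_of_le_one_right ha0.le hE1
    linarith
  have hae0 : (0:ℝ) ≤ a*E := by positivity
  have hη1 : 1 - a*E ≤ 1 := by nlinarith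
  have hη2 : (1:ℝ)/2 ≤ 1 - a*E := by nlinarith
  have hp0 : (1:ℝ)/2 < ψ r := by linarith
  have hep : (1:ℝ)/2 ≤ (1-a*E)*(ψ r) := by
    have h1 : (9:ℝ)/10 ≤ 1-a*E := by linarith
    have h2 : (9:ℝ)/10 ≤ ψ r := by linarith
    nlinarith [mul_le_mul h1 h2 (by norm_num : (0:ℝ) ≤ 9/10) (by linarith : (0:ℝ) ≤ 1-a*E)]
  have hψd : Differentiable ℝ ψ := hψ.differentiable (by norm_num)
  have hne1 : (1 - a*E) ≠ 0 := by linarith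
  have hne2 : ψ r ≠ 0 := by linarith
  have hrne : r ≠ 0 := ne_of_gt hr0
  have hfr : (fun x => (1 - a * Real.exp (-b/x)) * ψ x) r = (1-a*E)*ψ r := by
    simp [hE]
  have hf1 : deriv (fun x => (1 - a * Real.exp (-b/x)) * ψ x) r
      = -(a*b/r^2*E) * ψ r + (1-a*E) * deriv ψ r := by
    rw [hE]; exact (deriv1_eq a b ψ hψd r hrne).deriv
  have hf2 : deriv (deriv (fun x => (1 - a * Real.exp (-b/x)) * ψ x)) r
      = -(a*b/r^4*(b-2*r)*E) * ψ r - 2*(a*b/r^2*E) * deriv ψ r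
        + (1-a*E) * deriv (deriv ψ) r := by
    rw [hE]; exact deriv2_eq a b ψ hψ r hr0
  have hC3 : (0:ℝ) ≤ (2-8*(n:ℝ)*a)*b - 4*r - 16*(n:ℝ)*δ*r^2 := by
    have h1 : (19/10:ℝ) ≤ 2-8*(n:ℝ)*a := by linarith
    have h2 : (19/10:ℝ)*b ≤ (2-8*(n:ℝ)*a)*b := mul_le_mul_of_nonneg_right h1 hb0.le
    have h3 : ((n:ℝ)*δ)*r^2 ≤ (1/100)*(1/4) :=
      mul_le_mul hndelta hrr (sq_nonneg r) (by norm_num)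
    nlinarith [h2, h3]
  have hS0 : (0:ℝ) ≤ (n:ℝ)*a*b/(2*r^4)
      * ((2-8*(n:ℝ)*a)*b - 4*r - 16*(n:ℝ)*δ*r^2) * E := by
    apply mul_nonneg (mul_nonneg _ hC3) hE0.le
    positivity
  have c1 : (0:ℝ) ≤ 2*(n:ℝ) := by positivity
  have c2 : (0:ℝ) ≤ (n:ℝ)*((n:ℝ)-1) := by nlinarith
  -- Part 1 : radial curvature
  have hid1 : Krad (fun x => (1 - a * Real.exp (-b/x)) * ψ x) r
      = Krad ψ r + ((a*b/r^4*(b-2*r)*E) * ψ r + 2*(a*b/r^2*E) * deriv ψ r)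
          / ((1-a*E) * ψ r) := by
    simp only [Krad]
    rw [hf2, ← hE]
    field_simp
    ring
  have hbr1 : 0 ≤ 2*(b-2*r)*ψ r + 4*r^2*deriv ψ r - (b-2*r-8*δ*r^2)*(1-a*E)*ψ r :=
    rad_bracket b r (ψ r) (deriv ψ r) δ (a*E) hb200 hr0 hr2 hp0.le hp1l.le hδ0.le
      hδ200.le hae0
  have hkey1 : (a*b/r^4*(b-2*r)*E) * ψ r + 2*(a*b/r^2*E) * deriv ψ r
      - (a*b/(2*r^4)*(b-2*r-8*δ*r^2)*E) * ((1-a*E)*ψ r)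
      = (a*b*E/(2*r^4)) * (2*(b-2*r)*ψ r + 4*r^2*deriv ψ r
          - (b-2*r-8*δ*r^2)*(1-a*E)*ψ r) := by
    field_simp
    ring
  have hW : (0:ℝ) < a*b*E/(2*r^4) := div_pos (mul_pos (mul_pos ha0 hb0) hE0) (by linarith)
  have hT : a*b/(2*r^4)*(b-2*r-8*δ*r^2)*E
      ≤ ((a*b/r^4*(b-2*r)*E) * ψ r + 2*(a*b/r^2*E) * deriv ψ r) / ((1-a*E)*ψ r) := by
    rw [le_div_iff₀ (by linarith : (0:ℝ) < (1-a*E)*ψ r)]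
    linarith only [mul_nonneg hW.le hbr1, hkey1]
  have part1a : Krad ψ r + a*b/(2*r^4)*(b-2*r-8*δ*r^2)*E
      ≤ Krad (fun x => (1 - a * Real.exp (-b/x)) * ψ x) r := by
    rw [hid1]; linarith only [hT]
  have hT0 : (0:ℝ) < b - 2*r - 8*δ*r^2 := by nlinarith
  have hTpos : (0:ℝ) < a*b/(2*r^4)*(b-2*r-8*δ*r^2)*E :=
    mul_pos (mul_pos (div_pos (mul_pos ha0 hb0) (by linarith)) hT0) hE0
  have part1b : Krad ψ r < Krad (fun x => (1 - a * Real.exp (-b/x)) * ψ x) r := by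
    linarith only [part1a, hTpos]
  -- Part 2 : orbital curvature
  have hid2 : Korb (fun x => (1 - a * Real.exp (-b/x)) * ψ x) r
      = Korb ψ r + (1 - (1-a*E)^2 - (a*b/r^2*E)^2*(ψ r)^2
          + 2*(1-a*E)*(deriv ψ r)*(a*b/r^2*E)*(ψ r)) / ((1-a*E)^2*(ψ r)^2) := by
    simp only [Korb]
    rw [hf1, ← hE]
    field_simp
    ring
  have hu0 : (0:ℝ) ≤ a*b/r^2*E := by positivity
  have horb := orb_ineq (a*b/r^2*E) (1-a*E) (ψ r) (deriv ψ r) δ hu0 hη1 hη2 hp0.le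
    hp1l.le hδ0.le hep
  have hdenom : (0:ℝ) < (1-a*E)^2*(ψ r)^2 :=
    mul_pos (pow_pos (by linarith) 2) (pow_pos (by linarith) 2)
  have hdiv : -(4*δ*(a*b/r^2*E) + 4*(a*b/r^2*E)^2)
      ≤ (1 - (1-a*E)^2 - (a*b/r^2*E)^2*(ψ r)^2
          + 2*(1-a*E)*(deriv ψ r)*(a*b/r^2*E)*(ψ r)) / ((1-a*E)^2*(ψ r)^2) := by
    rw [le_div_iff₀ hdenom]
    linarith only [horb]
  have part2 : Korb ψ r - 4*δ*(a*b/r^2)*E - 4*((a*b/r^2)*E)^2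
      ≤ Korb (fun x => (1 - a * Real.exp (-b/x)) * ψ x) r := by
    rw [hid2]; linarith only [hdiv]
  -- Part 3 : scalar curvature
  have hA := mul_le_mul_of_nonneg_left part1a c1
  have hB := mul_le_mul_of_nonneg_left part2 c2
  have hsb := scal_bracket (n:ℝ) a b E δ r hn2 (by positivity) hE1 hδ0.le
  have hkey3 : 2*(n:ℝ)*(a*b/(2*r^4)*(b-2*r-8*δ*r^2)*E)
      + (n:ℝ)*((n:ℝ)-1)*(-(4*δ*(a*b/r^2)*E + 4*((a*b/r^2)*E)^2))
      - ((n:ℝ)*a*b/(2*r^4)*((2-8*(n:ℝ)*a)*b - 4*r - 16*(n:ℝ)*δ*r^2)*E)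
      = (a*b*E/(2*r^4)) * (2*(n:ℝ)*(b-2*r-8*δ*r^2) - 8*(n:ℝ)*((n:ℝ)-1)*δ*r^2
          - 8*(n:ℝ)*((n:ℝ)-1)*(a*b)*E
          - (n:ℝ)*((2-8*(n:ℝ)*a)*b - 4*r - 16*(n:ℝ)*δ*r^2)) := by
    field_simp
    ring
  have hfac : (0:ℝ) ≤ (a*b*E/(2*r^4)) * (2*(n:ℝ)*(b-2*r-8*δ*r^2)
      - 8*(n:ℝ)*((n:ℝ)-1)*δ*r^2 - 8*(n:ℝ)*((n:ℝ)-1)*(a*b)*E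
      - (n:ℝ)*((2-8*(n:ℝ)*a)*b - 4*r - 16*(n:ℝ)*δ*r^2)) := mul_nonneg hW.le hsb
  have hS : (n:ℝ)*a*b/(2*r^4) * ((2-8*(n:ℝ)*a)*b - 4*r - 16*(n:ℝ)*δ*r^2) * E
      ≤ 2*(n:ℝ)*(a*b/(2*r^4)*(b-2*r-8*δ*r^2)*E)
        + (n:ℝ)*((n:ℝ)-1)*(-(4*δ*(a*b/r^2)*E + 4*((a*b/r^2)*E)^2)) := by
    linarith only [hkey3, hfac]
  have part3a : Rscal n ψ r + (n:ℝ)*a*b/(2*r^4)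
      * ((2-8*(n:ℝ)*a)*b - 4*r - 16*(n:ℝ)*δ*r^2) * E
      ≤ Rscal n (fun x => (1 - a * Real.exp (-b/x)) * ψ x) r := by
    simp only [Rscal]
    linarith only [hA, hB, hS]
  have part3b : Rscal n ψ r ≤ Rscal n (fun x => (1 - a * Real.exp (-b/x)) * ψ x) r := by
    linarith only [part3a, hS0]
  exact ⟨⟨part1a, part1b⟩, part2, part3a, part3b⟩

/-- Curvature comparison for the surgery cutoff: with `η(r) = 1 − a e^{−b/r}`, `b = 100n`,
`a = 1/(100n)²`, and `‖ψ − 1‖_{C²} < δ` for `δ` small, the warped metric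
`dr² + (ηψ)²g_{Sⁿ}` satisfies on `(0, 1/2]` the stated lower bounds for the modified
radial, orbital and scalar curvatures in terms of those of `dr² + ψ²g_{Sⁿ}`. -/
theorem stmt11 (n : ℕ) (hn : 2 ≤ n) :
    ∃ δ₀ > (0 : ℝ), ∀ δ ∈ Ioo (0 : ℝ) δ₀, ∀ ψ : ℝ → ℝ, ContDiff ℝ 2 ψ →
      (∀ r ∈ Icc (0 : ℝ) 1,
        |ψ r - 1| < δ ∧ |deriv ψ r| < δ ∧ |deriv (deriv ψ) r| < δ) →
      ∀ r ∈ Ioc (0 : ℝ) (1 / 2),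
        letI a : ℝ := 1 / (100 * (n : ℝ)) ^ 2
        letI b : ℝ := 100 * (n : ℝ)
        letI f : ℝ → ℝ := fun x => (1 - a * Real.exp (-b / x)) * ψ x
        (Krad ψ r + a * b / (2 * r ^ 4) * (b - 2 * r - 8 * δ * r ^ 2) * Real.exp (-b / r)
            ≤ Krad f r ∧ Krad ψ r < Krad f r) ∧
        (Korb ψ r - 4 * δ * (a * b / r ^ 2) * Real.exp (-b / r)
            - 4 * ((a * b / r ^ 2) * Real.exp (-b / r)) ^ 2 ≤ Korb f r) ∧
        (Rscal n ψ r + (n : ℝ) * a * b / (2 * r ^ 4)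
              * ((2 - 8 * (n : ℝ) * a) * b - 4 * r - 16 * (n : ℝ) * δ * r ^ 2)
              * Real.exp (-b / r) ≤ Rscal n f r ∧
          Rscal n ψ r ≤ Rscal n f r) := by
  have hnpos : (0:ℝ) < (n:ℝ) := by
    have : 0 < n := lt_of_lt_of_le (by norm_num) hn
    exact_mod_cast this
  refine ⟨1 / (100 * (n : ℝ)), by positivity, ?_⟩
  intro δ hδ ψ hψ hψb r hr
  exact main_aux n hn _ _ rfl rfl δ hδ ψ hψ hψb r hr
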